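/- Let A ∈ C_n (finite structures with n-ary relation R and δ(X) = |X| - |R^X| ≥ 0 for all X ⊆ A) and let F ⊆ A. Construct two extensions of F by an n-tuple ā of new elements: A' with R^{A'} = R^F and B' with R^{B'} = R^F ∪ {ā}. Then F ≤ A' and F ≤ B' (both extensions are strong), and A', B' ∈ C_n but A' and B' are not isomorphic over F (when n ≥ 1 and the tuple ā has distinct new elements). -/
import Mathlib


/-- For `F ∈ C_n`, extending `F` by an `n`-tuple `ā` of distinct new elements with
either no new relation (`A'`) or the single new relation `ā` (`B'`) gives two strong
extensions `F ≤ A'`, `F ≤ B'` lying in `C_n`, which are not isomorphic over `F`. -/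
theorem stmt_11 {α : Type*} [DecidableEq α] (n : ℕ) (hn : 1 ≤ n)
    (F : Finset α) (RF : Finset (Fin n → α))
    (hRF : ∀ t ∈ RF, ∀ i, t i ∈ F)
    (hCn : ∀ X ⊆ F, 0 ≤ (X.card : ℤ) - ((RF.filter fun t => ∀ i, t i ∈ X).card : ℤ))
    (a : Fin n → α) (hainj : Function.Injective a) (hanew : ∀ i, a i ∉ F)
    (δ : Finset (Fin n → α) → Finset α → ℤ)
    (hδ : ∀ (R : Finset (Fin n → α)) (X : Finset α),
      δ R X = (X.card : ℤ) - ((R.filter fun t => ∀ i, t i ∈ X).card : ℤ))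
    (U : Finset α) (hU : U = F ∪ Finset.image a Finset.univ)
    (RA RB : Finset (Fin n → α)) (hRA : RA = RF) (hRB : RB = insert a RF) :
    -- F ≤ A' and F ≤ B'
    (∀ X : Finset α, F ⊆ X → X ⊆ U → 0 ≤ δ RA X - δ RA F) ∧
    (∀ X : Finset α, F ⊆ X → X ⊆ U → 0 ≤ δ RB X - δ RB F) ∧
    -- A', B' ∈ C_n
    (∀ X ⊆ U, 0 ≤ δ RA X) ∧ (∀ X ⊆ U, 0 ≤ δ RB X) ∧
    -- A' and B' are not isomorphic over F
    ¬ ∃ g : α → α, Set.BijOn g ↑U ↑U ∧ (∀ x ∈ F, g x = x) ∧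
      (∀ t : Fin n → α, (∀ i, t i ∈ U) → (t ∈ RA ↔ (fun i => g (t i)) ∈ RB)) := by
  subst hU; subst RA; subst RB
  have i0 : Fin n := ⟨0, hn⟩
  have hanotRF : a ∉ RF := fun h => hanew i0 (hRF a h i0)
  have hfiltF : ∀ X : Finset α, F ⊆ X → RF.filter (fun t => ∀ i, t i ∈ X) = RF := by
    intro X hFX
    exact Finset.filter_true_of_mem (fun t ht i => hFX (hRF t ht i))
  have hfiltX : ∀ X : Finset α,
      RF.filter (fun t => ∀ i, t i ∈ X) = RF.filter (fun t => ∀ i, t i ∈ X ∩ F) := by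
    intro X
    apply Finset.filter_congr
    intro t ht
    simp only [Finset.mem_inter]
    exact ⟨fun h i => ⟨h i, hRF t ht i⟩, fun h i => (h i).1⟩
  have hdisj : Disjoint F (Finset.image a Finset.univ) := by
    rw [Finset.disjoint_right]
    intro x hx
    obtain ⟨i, _, rfl⟩ := Finset.mem_image.1 hx
    exact hanew i
  have hcardX : ∀ X ⊆ F ∪ Finset.image a Finset.univ,
      X.card = (X ∩ F).card + (X ∩ Finset.image a Finset.univ).card := by
    intro X hX
    have h1 : X = (X ∩ F) ∪ (X ∩ Finset.image a Finset.univ) := by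
      rw [← Finset.inter_union_distrib_left]
      exact (Finset.inter_eq_left.2 hX).symm
    rw [← Finset.card_union_of_disjoint
      (hdisj.mono (Finset.inter_subset_right) (Finset.inter_subset_right)), ← h1]
  have hfiltB : ∀ X : Finset α,
      (((insert a RF).filter (fun t => ∀ i, t i ∈ X)).card : ℤ)
        = ((RF.filter (fun t => ∀ i, t i ∈ X)).card : ℤ)
          + (if ∀ i, a i ∈ X then 1 else 0) := by
    intro X
    rw [Finset.filter_insert]
    split
    · rw [Finset.card_insert_of_notMem (by simp [hanotRF])]
      push_cast; ring
    · simp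
  refine ⟨?_, ?_, ?_, ?_, ?_⟩
  · intro X hFX hXU
    rw [hδ, hδ, hfiltF X hFX, hfiltF F le_rfl]
    have := Finset.card_le_card hFX
    omega
  · intro X hFX hXU
    rw [hδ, hδ, hfiltB X, hfiltB F, hfiltF X hFX, hfiltF F le_rfl]
    have h1 : ¬ ∀ i, a i ∈ F := fun h => hanew i0 (h i0)
    rw [if_neg h1]
    by_cases h2 : ∀ i, a i ∈ X
    · rw [if_pos h2]
      have h3 : insert (a i0) F ⊆ X := Finset.insert_subset (h2 i0) hFX
      have h4 := Finset.card_le_card h3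
      rw [Finset.card_insert_of_notMem (hanew i0)] at h4
      omega
    · rw [if_neg h2]
      have := Finset.card_le_card hFX
      omega
  · intro X hXU
    rw [hδ, hfiltX X]
    have h1 := hCn (X ∩ F) Finset.inter_subset_right
    have h2 : ((X ∩ F).card : ℤ) ≤ X.card := by
      exact_mod_cast Finset.card_le_card Finset.inter_subset_left
    linarith
  · intro X hXU
    rw [hδ, hfiltB X, hfiltX X]
    have h1 := hCn (X ∩ F) Finset.inter_subset_right
    have hc := hcardX X hXU
    by_cases h2 : ∀ i, a i ∈ X
    · rw [if_pos h2]
      have himg : Finset.image a Finset.univ ⊆ X := by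
        intro x hx
        obtain ⟨i, _, rfl⟩ := Finset.mem_image.1 hx
        exact h2 i
      have h3 : (X ∩ Finset.image a Finset.univ) = Finset.image a Finset.univ :=
        Finset.inter_eq_right.2 himg
      have h4 : (Finset.image a Finset.univ).card = n := by
        rw [Finset.card_image_of_injective _ hainj, Finset.card_univ, Fintype.card_fin]
      rw [h3, h4] at hc
      have hc' : (X.card : ℤ) = (X ∩ F).card + n := by exact_mod_cast hc
      have hn' : (1 : ℤ) ≤ n := by exact_mod_cast hn
      linarith
    · rw [if_neg h2]
      have h5 : ((X ∩ F).card : ℤ) ≤ X.card := by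
        exact_mod_cast Finset.card_le_card Finset.inter_subset_left
      linarith
  · rintro ⟨g, hbij, hfix, hpres⟩
    have haiU : ∀ i, a i ∈ (↑(F ∪ Finset.image a Finset.univ) : Set α) := by
      intro i
      simp only [Finset.coe_union, Set.mem_union, Finset.mem_coe]
      exact Or.inr (by simp [Finset.mem_image])
    choose t htU htg using fun i => hbij.surjOn (haiU i)
    have h1 := hpres t (fun i => by simpa using htU i)
    have h2 : (fun i => g (t i)) = a := funext htg
    rw [h2] at h1
    have h3 : t ∈ RF := h1.2 (Finset.mem_insert_self a RF)
    have h4 : t i0 ∈ F := hRF t h3 i0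
    have h5 : g (t i0) = t i0 := hfix _ h4
    rw [htg i0] at h5
    exact hanew i0 (h5 ▸ h4)
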